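/- Let λ be a σ-finite measure on a measurable space and let p, q be nonnegative measurable functions with ∫ p dλ = ∫ q dλ = 1, defining probability measures P := p·λ and Q := q·λ. Define r := (√p − √q)/(√p + √q), with r := 0 on the set where p = q = 0. Then d_TV(P, Q)² ≤ ∫ (√p − √q)² dλ = ∫ r·(p − q) dλ, and for every bounded measurable function f, ∫ (√p − √q)² dλ ≤ 2·ess sup|r − f| + ∫ f·(p − q) dλ. -/

import Mathlib

open MeasureTheory

/-- Total variation distance between two measures. -/
noncomputable def tvDist {Ω : Type*} [MeasurableSpace Ω] (P Q : Measure Ω) : ℝ :=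
  ⨆ A : {A : Set Ω // MeasurableSet A}, |(P A.1).toReal - (Q A.1).toReal|

/-- Le Cam's inequality (TV ≤ Hellinger), the Hellinger-ratio identity, and the
discriminator-approximation decomposition of the squared Hellinger distance.
Note that in Lean, division by zero equals zero, so the ratio
`(√p − √q)/(√p + √q)` is automatically `0` on the set where `p = q = 0`. -/
theorem hellinger_decomposition {Ω : Type*} [MeasurableSpace Ω]
    (lam : Measure Ω) [SigmaFinite lam]
    (p q : Ω → ℝ) (hp : Measurable p) (hq : Measurable q)
    (hp0 : ∀ x, 0 ≤ p x) (hq0 : ∀ x, 0 ≤ q x)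
    (hpint : ∫ x, p x ∂lam = 1) (hqint : ∫ x, q x ∂lam = 1)
    (f : Ω → ℝ) (hfm : Measurable f) (Bf : ℝ) (hfb : ∀ x, |f x| ≤ Bf) :
    tvDist (lam.withDensity fun x => ENNReal.ofReal (p x))
        (lam.withDensity fun x => ENNReal.ofReal (q x)) ^ 2
      ≤ ∫ x, (Real.sqrt (p x) - Real.sqrt (q x)) ^ 2 ∂lam ∧
    ∫ x, (Real.sqrt (p x) - Real.sqrt (q x)) ^ 2 ∂lam
      = ∫ x, ((Real.sqrt (p x) - Real.sqrt (q x)) / (Real.sqrt (p x) + Real.sqrt (q x)))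
          * (p x - q x) ∂lam ∧
    ∫ x, (Real.sqrt (p x) - Real.sqrt (q x)) ^ 2 ∂lam
      ≤ 2 * essSup (fun x =>
            |(Real.sqrt (p x) - Real.sqrt (q x)) / (Real.sqrt (p x) + Real.sqrt (q x)) - f x|) lam
        + ∫ x, f x * (p x - q x) ∂lam := by
  -- abbreviations
  set s : Ω → ℝ := fun x => Real.sqrt (p x) with hs_def
  set t : Ω → ℝ := fun x => Real.sqrt (q x) with ht_def
  have hs0 : ∀ x, 0 ≤ s x := fun x => Real.sqrt_nonneg _
  have ht0 : ∀ x, 0 ≤ t x := fun x => Real.sqrt_nonneg _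
  have hsq_p : ∀ x, s x ^ 2 = p x := fun x => Real.sq_sqrt (hp0 x)
  have hsq_q : ∀ x, t x ^ 2 = q x := fun x => Real.sq_sqrt (hq0 x)
  have hsm : Measurable s := hp.sqrt
  have htm : Measurable t := hq.sqrt
  -- integrability of p and q
  have hPi : Integrable p lam := by
    by_contra h
    rw [integral_undef h] at hpint; norm_num at hpint
  have hQi : Integrable q lam := by
    by_contra h
    rw [integral_undef h] at hqint; norm_num at hqint
  have hpq_add : Integrable (fun x => p x + q x) lam := hPi.add hQi
  -- integrability of s*t
  have hst_i : Integrable (fun x => s x * t x) lam := by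
    refine Integrable.mono' (hpq_add.const_mul (1/2 : ℝ))
      (hsm.mul htm).aestronglyMeasurable (ae_of_all _ fun x => ?_)
    rw [Real.norm_eq_abs, abs_of_nonneg (mul_nonneg (hs0 x) (ht0 x))]
    nlinarith [sq_nonneg (s x - t x), hsq_p x, hsq_q x]
  -- integrability of (s-t)^2 and (s+t)^2
  have hHfun : (fun x => (s x - t x) ^ 2) = fun x => p x + q x - 2 * (s x * t x) := by
    funext x; rw [← hsq_p x, ← hsq_q x]; ring
  have hGfun : (fun x => (s x + t x) ^ 2) = fun x => p x + q x + 2 * (s x * t x) := by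
    funext x; rw [← hsq_p x, ← hsq_q x]; ring
  have hH_i : Integrable (fun x => (s x - t x) ^ 2) lam := by
    rw [hHfun]; exact hpq_add.sub (hst_i.const_mul 2)
  have hG_i : Integrable (fun x => (s x + t x) ^ 2) lam := by
    rw [hGfun]; exact hpq_add.add (hst_i.const_mul 2)
  set H : ℝ := ∫ x, (s x - t x) ^ 2 ∂lam with hH_def
  have hH0 : 0 ≤ H := integral_nonneg fun x => sq_nonneg _
  -- ∫ (s+t)^2 ≤ 4
  have hG4 : ∫ x, (s x + t x) ^ 2 ∂lam ≤ 4 := by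
    have h1 : ∫ x, s x * t x ∂lam ≤ ∫ x, (1/2 : ℝ) * (p x + q x) ∂lam := by
      refine integral_mono hst_i (hpq_add.const_mul (1/2 : ℝ)) fun x => ?_
      nlinarith [sq_nonneg (s x - t x), hsq_p x, hsq_q x]
    rw [integral_const_mul, integral_add hPi hQi, hpint, hqint] at h1
    rw [hGfun, integral_add hpq_add (hst_i.const_mul 2),
      integral_add hPi hQi, hpint, hqint, integral_const_mul]
    linarith
  -- part 2 : pointwise identity
  have part2 : H = ∫ x, ((s x - t x) / (s x + t x)) * (p x - q x) ∂lam := by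
    rw [hH_def]; congr 1; funext x
    by_cases h : s x + t x = 0
    · have h1 : s x = 0 := by linarith [hs0 x, ht0 x]
      have h2 : t x = 0 := by linarith [hs0 x, ht0 x]
      have hp' : p x = 0 := by rw [← hsq_p x, h1]; ring
      have hq' : q x = 0 := by rw [← hsq_q x, h2]; ring
      rw [h1, h2, hp', hq']; simp
    · rw [← hsq_p x, ← hsq_q x]
      field_simp
      ring
  -- r is bounded by 1
  set r : Ω → ℝ := fun x => (s x - t x) / (s x + t x) with hr_def
  have hrm : Measurable r := (hsm.sub htm).div (hsm.add htm)
  have hr1 : ∀ x, |r x| ≤ 1 := by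
    intro x
    by_cases h : s x + t x = 0
    · simp [hr_def, h]
    · have hpos : 0 < s x + t x :=
        lt_of_le_of_ne (add_nonneg (hs0 x) (ht0 x)) (Ne.symm h)
      rw [hr_def, abs_div, abs_of_pos hpos, div_le_one hpos, abs_sub_le_iff]
      constructor <;> linarith [hs0 x, ht0 x]
  -- basic integrability facts
  have hpq_i : Integrable (fun x => p x - q x) lam := hPi.sub hQi
  have habs_i : Integrable (fun x => |p x - q x|) lam := hpq_i.abs
  have htot : ∫ x, (p x - q x) ∂lam = 0 := by
    rw [integral_sub hPi hQi, hpint, hqint]; ring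
  -- Cauchy–Schwarz: ∫ |p - q| ≤ 2 √H
  have hCS : ∫ x, |p x - q x| ∂lam ≤ 2 * Real.sqrt H := by
    have hconj : (2:ℝ).HolderConjugate 2 := Real.HolderConjugate.two_two
    have hmem1 : MemLp (fun x => |s x - t x|) (ENNReal.ofReal 2) lam := by
      rw [show ENNReal.ofReal 2 = 2 by norm_num]
      refine (memLp_two_iff_integrable_sq (hsm.sub htm).abs.aestronglyMeasurable).mpr ?_
      simpa [sq_abs] using hH_i
    have hmem2 : MemLp (fun x => s x + t x) (ENNReal.ofReal 2) lam := by
      rw [show ENNReal.ofReal 2 = 2 by norm_num]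
      exact (memLp_two_iff_integrable_sq (hsm.add htm).aestronglyMeasurable).mpr hG_i
    have key := integral_mul_le_Lp_mul_Lq_of_nonneg hconj
      (ae_of_all _ fun x => abs_nonneg (s x - t x))
      (ae_of_all _ fun x => add_nonneg (hs0 x) (ht0 x)) hmem1 hmem2
    have hpow1 : ∫ x, |s x - t x| ^ (2:ℝ) ∂lam = H := by
      rw [hH_def]; congr 1; funext x
      rw [show ((2:ℝ) = ((2:ℕ):ℝ)) by norm_num, Real.rpow_natCast, sq_abs]
    have hpow2 : ∫ x, (s x + t x) ^ (2:ℝ) ∂lam = ∫ x, (s x + t x) ^ 2 ∂lam := by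
      congr 1; funext x
      rw [show ((2:ℝ) = ((2:ℕ):ℝ)) by norm_num, Real.rpow_natCast]
    rw [hpow1, hpow2] at key
    calc ∫ x, |p x - q x| ∂lam = ∫ x, |s x - t x| * (s x + t x) ∂lam := by
          congr 1; funext x
          rw [← hsq_p x, ← hsq_q x, ← abs_of_nonneg (add_nonneg (hs0 x) (ht0 x)), ← abs_mul]
          congr 1; ring
      _ ≤ H ^ (1/2:ℝ) * (∫ x, (s x + t x) ^ 2 ∂lam) ^ (1/2:ℝ) := key
      _ ≤ Real.sqrt H * Real.sqrt 4 := by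
          rw [Real.sqrt_eq_rpow, Real.sqrt_eq_rpow]
          exact mul_le_mul_of_nonneg_left
            (Real.rpow_le_rpow (integral_nonneg fun x => sq_nonneg _) hG4 (by norm_num))
            (Real.rpow_nonneg hH0 _)
      _ = 2 * Real.sqrt H := by
          rw [show (4:ℝ) = 2^2 by norm_num, Real.sqrt_sq (by norm_num : (0:ℝ) ≤ 2)]; ring
  -- value of the withDensity measures
  have hval : ∀ (g : Ω → ℝ), Measurable g → (∀ x, 0 ≤ g x) → ∀ A : Set Ω, MeasurableSet A →
      ((lam.withDensity fun x => ENNReal.ofReal (g x)) A).toReal = ∫ x in A, g x ∂lam := by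
    intro g hg hg0 A hA
    rw [withDensity_apply _ hA,
      integral_eq_lintegral_of_nonneg_ae (ae_of_all _ hg0) hg.aestronglyMeasurable]
  -- key bound for each measurable set
  have key : ∀ A : Set Ω, MeasurableSet A →
      |((lam.withDensity fun x => ENNReal.ofReal (p x)) A).toReal -
        ((lam.withDensity fun x => ENNReal.ofReal (q x)) A).toReal| ≤ Real.sqrt H := by
    intro A hA
    rw [hval p hp hp0 A hA, hval q hq hq0 A hA,
      ← integral_sub hPi.integrableOn hQi.integrableOn]
    have h1 : |∫ x in A, (p x - q x) ∂lam| ≤ ∫ x in A, |p x - q x| ∂lam := by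
      simpa [Real.norm_eq_abs] using
        norm_integral_le_integral_norm (μ := lam.restrict A) (fun x => p x - q x)
    have h2 : |∫ x in Aᶜ, (p x - q x) ∂lam| ≤ ∫ x in Aᶜ, |p x - q x| ∂lam := by
      simpa [Real.norm_eq_abs] using
        norm_integral_le_integral_norm (μ := lam.restrict Aᶜ) (fun x => p x - q x)
    have hsum : (∫ x in A, (p x - q x) ∂lam) + ∫ x in Aᶜ, (p x - q x) ∂lam = 0 := by
      rw [integral_add_compl hA hpq_i, htot]
    have hsumabs : (∫ x in A, |p x - q x| ∂lam) + ∫ x in Aᶜ, |p x - q x| ∂lam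
        = ∫ x, |p x - q x| ∂lam := integral_add_compl hA habs_i
    have heq2 : |∫ x in Aᶜ, (p x - q x) ∂lam| = |∫ x in A, (p x - q x) ∂lam| := by
      rw [show (∫ x in Aᶜ, (p x - q x) ∂lam) = -(∫ x in A, (p x - q x) ∂lam) by linarith,
        abs_neg]
    have h3 : 2 * |∫ x in A, (p x - q x) ∂lam| ≤ 2 * Real.sqrt H := by
      calc 2 * |∫ x in A, (p x - q x) ∂lam|
          = |∫ x in A, (p x - q x) ∂lam| + |∫ x in Aᶜ, (p x - q x) ∂lam| := by
            rw [heq2]; ring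
        _ ≤ (∫ x in A, |p x - q x| ∂lam) + ∫ x in Aᶜ, |p x - q x| ∂lam := add_le_add h1 h2
        _ = ∫ x, |p x - q x| ∂lam := hsumabs
        _ ≤ 2 * Real.sqrt H := hCS
    linarith
  -- Part 1
  have part1 : tvDist (lam.withDensity fun x => ENNReal.ofReal (p x))
      (lam.withDensity fun x => ENNReal.ofReal (q x)) ^ 2 ≤ H := by
    have hle : tvDist (lam.withDensity fun x => ENNReal.ofReal (p x))
        (lam.withDensity fun x => ENNReal.ofReal (q x)) ≤ Real.sqrt H :=
      ciSup_le fun A => key A.1 A.2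
    have hbdd : BddAbove (Set.range fun A : {A : Set Ω // MeasurableSet A} =>
        |((lam.withDensity fun x => ENNReal.ofReal (p x)) A.1).toReal -
          ((lam.withDensity fun x => ENNReal.ofReal (q x)) A.1).toReal|) := by
      refine ⟨Real.sqrt H, ?_⟩
      rintro _ ⟨A, rfl⟩
      exact key A.1 A.2
    have hnn : 0 ≤ tvDist (lam.withDensity fun x => ENNReal.ofReal (p x))
        (lam.withDensity fun x => ENNReal.ofReal (q x)) :=
      le_trans (abs_nonneg _) (le_ciSup hbdd ⟨∅, MeasurableSet.empty⟩)
    calc tvDist (lam.withDensity fun x => ENNReal.ofReal (p x))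
          (lam.withDensity fun x => ENNReal.ofReal (q x)) ^ 2
        ≤ Real.sqrt H ^ 2 := pow_le_pow_left₀ hnn hle 2
      _ = H := Real.sq_sqrt hH0
  -- Part 3
  have part3 : H ≤ 2 * essSup (fun x => |r x - f x|) lam + ∫ x, f x * (p x - q x) ∂lam := by
    set M := essSup (fun x => |r x - f x|) lam with hM_def
    have hrfb : ∀ x, |r x - f x| ≤ 1 + Bf := by
      intro x
      calc |r x - f x| ≤ |r x| + |f x| := abs_sub _ _
        _ ≤ 1 + Bf := add_le_add (hr1 x) (hfb x)
    have hbdd : Filter.IsBoundedUnder (· ≤ ·) (ae lam) (fun x => |r x - f x|) :=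
      Filter.isBoundedUnder_of ⟨1 + Bf, hrfb⟩
    have hM : ∀ᵐ x ∂lam, |r x - f x| ≤ M := ae_le_essSup hbdd
    have hrf_i : Integrable (fun x => (r x - f x) * (p x - q x)) lam :=
      hpq_i.bdd_mul ((hrm.sub hfm).aestronglyMeasurable)
        (ae_of_all _ fun x => by rw [Real.norm_eq_abs]; exact hrfb x)
    have hf_i : Integrable (fun x => f x * (p x - q x)) lam :=
      hpq_i.bdd_mul hfm.aestronglyMeasurable
        (ae_of_all _ fun x => by rw [Real.norm_eq_abs]; exact hfb x)
    have hsplit : ∫ x, r x * (p x - q x) ∂lam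
        = (∫ x, (r x - f x) * (p x - q x) ∂lam) + ∫ x, f x * (p x - q x) ∂lam := by
      rw [← integral_add hrf_i hf_i]; congr 1; funext x; ring
    have hbound : ∫ x, (r x - f x) * (p x - q x) ∂lam ≤ 2 * M := by
      have h1 : ∫ x, (r x - f x) * (p x - q x) ∂lam ≤ ∫ x, M * (p x + q x) ∂lam := by
        refine integral_mono_ae hrf_i (hpq_add.const_mul M) ?_
        filter_upwards [hM] with x hMx
        have habspq : |p x - q x| ≤ p x + q x := by
          rw [abs_sub_le_iff]; constructor <;> linarith [hp0 x, hq0 x]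
        calc (r x - f x) * (p x - q x) ≤ |(r x - f x) * (p x - q x)| := le_abs_self _
          _ = |r x - f x| * |p x - q x| := abs_mul _ _
          _ ≤ M * (p x + q x) := mul_le_mul hMx habspq (abs_nonneg _)
              (le_trans (abs_nonneg _) hMx)
      rw [integral_const_mul, integral_add hPi hQi, hpint, hqint] at h1
      linarith
    calc H = ∫ x, r x * (p x - q x) ∂lam := part2
      _ = (∫ x, (r x - f x) * (p x - q x) ∂lam) + ∫ x, f x * (p x - q x) ∂lam := hsplit
      _ ≤ 2 * M + ∫ x, f x * (p x - q x) ∂lam := by linarith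
  exact ⟨part1, part2, part3⟩
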